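/- For base β = 2: if x ∈ F satisfies x² ≥ ν and fl rounds to nearest, then fl(√(fl(x²))) = |x|; i.e., rounding the square and then the square root recovers |x| exactly. -/

import Mathlib

noncomputable section

/-- The set of positive normal floating point numbers with exponent `e`. -/
def Eset (β μ : ℕ) (e : ℤ) : Set ℝ :=
  {x | ∃ r : ℕ, r < (β - 1) * β ^ μ ∧ x = (β : ℝ) ^ e * ((β : ℝ) ^ μ + r)}

/-- Perfect floating point system: all integer exponents. -/
def PerfectF (β μ : ℕ) : Set ℝ :=
  {x | x = 0 ∨ ∃ e : ℤ, x ∈ Eset β μ e ∨ -x ∈ Eset β μ e}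

/-- MPFR system: exponents bounded below by `emin`, no subnormals. -/
def MPFRF (β μ : ℕ) (emin : ℤ) : Set ℝ :=
  {x | x = 0 ∨ ∃ e : ℤ, emin ≤ e ∧ (x ∈ Eset β μ e ∨ -x ∈ Eset β μ e)}

/-- Subnormal numbers (both signs) for minimal exponent `emin`. -/
def SubN (β μ : ℕ) (emin : ℤ) : Set ℝ :=
  {x | ∃ r : ℕ, 1 ≤ r ∧ r < β ^ μ ∧ (x = (β : ℝ) ^ emin * r ∨ x = -((β : ℝ) ^ emin * r))}

/-- IEEE system: MPFR system augmented with subnormal numbers. -/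
def IEEEF (β μ : ℕ) (emin : ℤ) : Set ℝ := MPFRF β μ emin ∪ SubN β μ emin

/-- `fl` rounds to nearest in `F`. -/
def RTN (F : Set ℝ) (fl : ℝ → ℝ) : Prop :=
  ∀ z : ℝ, fl z ∈ F ∧ ∀ x ∈ F, |fl z - z| ≤ |x - z|

/-- Recursively rounded sum: `rsum fl y 0 = y 0`,
`rsum fl y (k+1) = fl (k+1) (rsum fl y k + y (k+1))`. -/
def rsum (fl : ℕ → ℝ → ℝ) (y : ℕ → ℝ) : ℕ → ℝ
  | 0 => y 0
  | k + 1 => fl (k + 1) (rsum fl y k + y (k + 1))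

/-- Ties are broken downward. -/
def BreaksTiesDown (F : Set ℝ) (fl : ℝ → ℝ) : Prop :=
  ∀ z : ℝ, ∀ x ∈ F, |x - z| = |fl z - z| → fl z ≤ x

/-- Ties are broken upward. -/
def BreaksTiesUp (F : Set ℝ) (fl : ℝ → ℝ) : Prop :=
  ∀ z : ℝ, ∀ x ∈ F, |x - z| = |fl z - z| → x ≤ fl z

lemma rtn_fix {F fl} (hfl : RTN F fl) {x : ℝ} (hx : x ∈ F) : fl x = x := by
  have h := (hfl x).2 x hx
  simp only [sub_self, abs_zero] at h
  have := abs_nonneg (fl x - x)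
  have : |fl x - x| = 0 := le_antisymm h this
  have := abs_eq_zero.mp this
  linarith

lemma rtn_closest {F fl} (hfl : RTN F fl) {x : ℝ} (hx : x ∈ F) (z : ℝ)
    (h : ∀ f ∈ F, f ≠ x → |x - z| < |f - z|) : fl z = x := by
  by_contra hne
  have h1 := (hfl z).2 x hx
  have h2 := h _ (hfl z).1 hne
  linarith

lemma closest_of_gap {x z a b f : ℝ} (hb : 0 < b) (hba : b ≤ a)
    (hf : x + a ≤ f ∨ f ≤ x - b) (hz1 : x - b/2 < z) (hz2 : z < x + a/2) :
    |x - z| < |f - z| := by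
  have hxz : |x - z| < a/2 := by
    rw [abs_lt]; constructor <;> linarith
  rcases hf with h | h
  · have hfz : a/2 < f - z := by linarith
    calc |x - z| < a/2 := hxz
    _ < f - z := hfz
    _ ≤ |f - z| := le_abs_self _
  · have hfz : z - f > 0 := by linarith
    have : |f - z| = z - f := by rw [abs_sub_comm, abs_of_pos hfz]
    rw [this]
    rcases le_or_gt z x with hc | hc
    · rw [abs_of_nonneg (by linarith)]; linarith
    · rw [abs_of_neg (by linarith)]; linarith

lemma mem_eset {μ k : ℕ} {e : ℤ} (hk1 : 2^μ ≤ k) (hk2 : k < 2^(μ+1)) :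
    (2:ℝ)^e * k ∈ Eset 2 μ e := by
  refine ⟨k - 2^μ, by simp only [pow_succ] at hk2 ⊢; simpa using (by omega : k - 2^μ < 2^μ), ?_⟩
  have : ((2:ℕ):ℝ) = (2:ℝ) := by norm_num
  rw [this]
  push_cast [Nat.cast_sub hk1]
  ring

lemma mem_eset' {μ k : ℕ} {e : ℤ} (hk1 : 2^μ ≤ k) (hk2 : k ≤ 2^(μ+1)) :
    ∃ e' : ℤ, e ≤ e' ∧ (2:ℝ)^e * k ∈ Eset 2 μ e' := by
  rcases lt_or_eq_of_le hk2 with h | h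
  · exact ⟨e, le_refl e, mem_eset hk1 h⟩
  · refine ⟨e + 1, by omega, ?_⟩
    have : (2:ℝ)^e * k = (2:ℝ)^(e+1) * (2^μ : ℕ) := by
      subst h
      rw [zpow_add_one₀ (two_ne_zero)]
      push_cast
      ring
    rw [this]
    exact mem_eset le_rfl (Nat.pow_lt_pow_succ one_lt_two)

lemma elem_eset {μ : ℕ} {e : ℤ} {f : ℝ} (hf : f ∈ Eset 2 μ e) :
    ∃ m' : ℕ, 2^μ ≤ m' ∧ m' < 2^(μ+1) ∧ f = (2:ℝ)^e * m' := by
  obtain ⟨r, hr, hfe⟩ := hf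
  simp only [pow_succ] at *
  refine ⟨2^μ + r, by omega, by simp at hr; omega, ?_⟩
  rw [hfe]
  simp only [Nat.cast_ofNat]
  push_cast
  ring

lemma eset_pos' {μ : ℕ} {e : ℤ} {f : ℝ} (hf : f ∈ Eset 2 μ e) : 0 < f := by
  obtain ⟨m', h1, h2, h3⟩ := elem_eset hf
  have hm : 0 < m' := lt_of_lt_of_le (Nat.pow_pos two_pos) h1
  rw [h3]
  have : (0:ℝ) < m' := by exact_mod_cast hm
  positivity

lemma mem_perfect {μ k : ℕ} {e : ℤ} (hk1 : 2^μ ≤ k) (hk2 : k ≤ 2^(μ+1)) :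
    (2:ℝ)^e * k ∈ PerfectF 2 μ := by
  obtain ⟨e', _, h⟩ := mem_eset' hk1 hk2
  exact Or.inr ⟨e', Or.inl h⟩

lemma mem_mpfr {μ k : ℕ} {emin e : ℤ} (he : emin ≤ e) (hk1 : 2^μ ≤ k) (hk2 : k ≤ 2^(μ+1)) :
    (2:ℝ)^e * k ∈ MPFRF 2 μ emin := by
  obtain ⟨e', he', h⟩ := mem_eset' hk1 hk2
  exact Or.inr ⟨e', le_trans he he', Or.inl h⟩

lemma mem_ieee {μ k : ℕ} {emin e : ℤ} (he : emin ≤ e) (hk1 : 2^μ ≤ k) (hk2 : k ≤ 2^(μ+1)) :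
    (2:ℝ)^e * k ∈ IEEEF 2 μ emin := Or.inl (mem_mpfr he hk1 hk2)

lemma elem_perfect {μ : ℕ} {f : ℝ} (hf : f ∈ PerfectF 2 μ) :
    f ≤ 0 ∨ ∃ e' : ℤ, ∃ m' : ℕ, 2^μ ≤ m' ∧ m' < 2^(μ+1) ∧ f = (2:ℝ)^e' * m' := by
  rcases hf with h | ⟨e', h | h⟩
  · exact Or.inl h.le
  · exact Or.inr ⟨e', elem_eset h⟩
  · left; have := eset_pos' h; linarith

lemma elem_mpfr {μ : ℕ} {emin : ℤ} {f : ℝ} (hf : f ∈ MPFRF 2 μ emin) :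
    f ≤ 0 ∨ ∃ e' : ℤ, ∃ m' : ℕ, 2^μ ≤ m' ∧ m' < 2^(μ+1) ∧ f = (2:ℝ)^e' * m' := by
  rcases hf with h | ⟨e', _, h | h⟩
  · exact Or.inl h.le
  · exact Or.inr ⟨e', elem_eset h⟩
  · left; have := eset_pos' h; linarith

lemma elem_ieee {μ : ℕ} {emin : ℤ} {f : ℝ} (hf : f ∈ IEEEF 2 μ emin) :
    f ≤ 0 ∨ (∃ e' : ℤ, ∃ m' : ℕ, 2^μ ≤ m' ∧ m' < 2^(μ+1) ∧ f = (2:ℝ)^e' * m')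
      ∨ (∃ r : ℕ, 1 ≤ r ∧ r < 2^μ ∧ f = (2:ℝ)^emin * r) := by
  rcases hf with h | ⟨r, hr1, hr2, h | h⟩
  · rcases elem_mpfr h with h | h
    · exact Or.inl h
    · exact Or.inr (Or.inl h)
  · exact Or.inr (Or.inr ⟨r, hr1, by simpa using hr2, by simpa using h⟩)
  · left
    rw [h]
    have h1 : (0:ℝ) < ((2:ℕ):ℝ)^emin := zpow_pos (by norm_num) emin
    have h2 : (0:ℝ) ≤ (r:ℝ) := Nat.cast_nonneg r
    nlinarith

-- decompositions of |f|
lemma decomp_eset {μ : ℕ} {e : ℤ} {f : ℝ} (hf : f ∈ Eset 2 μ e ∨ -f ∈ Eset 2 μ e) :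
    ∃ m' : ℕ, 2^μ ≤ m' ∧ m' < 2^(μ+1) ∧ |f| = (2:ℝ)^e * m' := by
  rcases hf with h | h
  · rw [abs_of_pos (eset_pos' h)]; exact elem_eset h
  · rw [abs_of_neg (by linarith [eset_pos' h])]; exact elem_eset h

lemma decomp_perfect {μ : ℕ} {f : ℝ} (hf : f ∈ PerfectF 2 μ) (h0 : f ≠ 0) :
    ∃ e : ℤ, ∃ m' : ℕ, 2^μ ≤ m' ∧ m' < 2^(μ+1) ∧ |f| = (2:ℝ)^e * m' := by
  rcases hf with h | ⟨e, h⟩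
  · exact absurd h h0
  · exact ⟨e, decomp_eset h⟩

lemma decomp_mpfr {μ : ℕ} {emin : ℤ} {f : ℝ} (hf : f ∈ MPFRF 2 μ emin) (h0 : f ≠ 0) :
    ∃ e : ℤ, emin ≤ e ∧ ∃ m' : ℕ, 2^μ ≤ m' ∧ m' < 2^(μ+1) ∧ |f| = (2:ℝ)^e * m' := by
  rcases hf with h | ⟨e, he, h⟩
  · exact absurd h h0
  · exact ⟨e, he, decomp_eset h⟩

lemma decomp_ieee {μ : ℕ} {emin : ℤ} {f : ℝ} (hf : f ∈ IEEEF 2 μ emin) (h0 : f ≠ 0) :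
    (∃ e : ℤ, emin ≤ e ∧ ∃ m' : ℕ, 2^μ ≤ m' ∧ m' < 2^(μ+1) ∧ |f| = (2:ℝ)^e * m')
    ∨ (∃ r : ℕ, 1 ≤ r ∧ r < 2^μ ∧ |f| = (2:ℝ)^emin * r) := by
  rcases hf with h | ⟨r, hr1, hr2, h | h⟩
  · exact Or.inl (decomp_mpfr h h0)
  · refine Or.inr ⟨r, hr1, by simpa using hr2, ?_⟩
    have hr0 : (0:ℝ) < r := by exact_mod_cast hr1
    have h1 : (0:ℝ) < ((2:ℕ):ℝ)^emin := zpow_pos (by norm_num) emin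
    rw [abs_of_pos (by rw [h]; positivity)]
    simpa using h
  · refine Or.inr ⟨r, hr1, by simpa using hr2, ?_⟩
    have hr0 : (0:ℝ) < r := by exact_mod_cast hr1
    have h1 : (0:ℝ) < ((2:ℕ):ℝ)^emin := zpow_pos (by norm_num) emin
    have : f < 0 := by rw [h]; simp; positivity
    rw [abs_of_neg this, h]
    simp

lemma two_le_pow_mu {μ : ℕ} (hμ : 1 ≤ μ) : (2:ℝ) ≤ 2^μ := by
  calc (2:ℝ) = 2^1 := (pow_one 2).symm
  _ ≤ 2^μ := pow_le_pow_right₀ one_le_two hμ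

lemma gap_lemma {μ : ℕ} (hμ : 1 ≤ μ) {emin e : ℤ} {m : ℕ} {x f : ℝ}
    (hm1 : 2^μ ≤ m) (hm2 : m < 2^(μ+1)) (hxe : x = (2:ℝ)^e * m)
    (hform : f ≤ 0 ∨ (∃ e' : ℤ, ∃ m' : ℕ, 2^μ ≤ m' ∧ m' < 2^(μ+1) ∧ f = (2:ℝ)^e' * m')
      ∨ (emin ≤ e ∧ ∃ r : ℕ, 1 ≤ r ∧ r < 2^μ ∧ f = (2:ℝ)^emin * r))
    (hne : f ≠ x) :
    x + 2^e ≤ f ∨ (f ≤ x - 2^(e-1) ∧ (2^μ + 1 ≤ m → f ≤ x - 2^e)) := by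
  have hP : (0:ℝ) < 2^e := zpow_pos two_pos e
  have hQ : (0:ℝ) < 2^(e-1) := zpow_pos two_pos (e-1)
  have hPQ : (2:ℝ)^(e-1) * 2 = 2^e := by
    rw [← zpow_add_one₀ (two_ne_zero)]; ring_nf
  have hmu2 : (2:ℝ) ≤ 2^μ := two_le_pow_mu hμ
  have hmR : ((2:ℝ))^μ ≤ (m:ℝ) := by exact_mod_cast hm1
  have hx2P : 2 * (2:ℝ)^e ≤ x := by
    rw [hxe]; nlinarith
  have hxmu : (2:ℝ)^e * 2^μ ≤ x := by
    rw [hxe]; nlinarith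
  rcases hform with h0 | ⟨e', m', hm'1, hm'2, hfe⟩ | ⟨hee, r, hr1, hr2, hfe⟩
  · -- f ≤ 0
    right
    constructor
    · linarith
    · intro _; linarith
  · -- normal f
    have hm'R : ((2:ℝ))^μ ≤ (m':ℝ) := by exact_mod_cast hm'1
    have hm'R2 : (m':ℝ) < 2^(μ+1) := by exact_mod_cast hm'2
    have hmR2 : (m:ℝ) < 2^(μ+1) := by exact_mod_cast hm2
    rcases le_or_gt e e' with hle | hlt
    · -- e ≤ e' : f = 2^e * K with K = 2^(e'-e).toNat * m'
      set n := (e' - e).toNat with hn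
      have hen : e' = e + (n:ℤ) := by
        simp only [hn]; omega
      have hfK : f = (2:ℝ)^e * ((2^n * m' : ℕ):ℝ) := by
        rw [hfe, hen, zpow_add₀ (two_ne_zero), zpow_natCast]
        push_cast; ring
      set K := 2^n * m' with hK
      have hKm : K ≠ m := by
        intro h
        apply hne
        rw [hfK, h, hxe]
      rcases lt_or_gt_of_ne hKm with h | h
      · -- K ≤ m - 1 : f ≤ x - 2^e
        right
        have hKR : ((K:ℕ):ℝ) ≤ (m:ℝ) - 1 := by
          have h' : K + 1 ≤ m := h
          have : ((K:ℕ):ℝ) + 1 ≤ (m:ℝ) := by exact_mod_cast h'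
          linarith
        constructor
        · rw [hfK, hxe]; nlinarith
        · intro _; rw [hfK, hxe]; nlinarith
      · -- K ≥ m + 1 : f ≥ x + 2^e
        left
        have hKR : (m:ℝ) + 1 ≤ ((K:ℕ):ℝ) := by exact_mod_cast h
        rw [hfK, hxe]; nlinarith
    · rcases eq_or_lt_of_le (by omega : e' ≤ e - 1) with heq | hlt2
      · -- e' = e - 1
        right
        have hm'le : (m':ℝ) ≤ 2*m - 1 := by
          have h' : m' + 1 ≤ 2 * m := by
            have : 2^(μ+1) ≤ 2*m := by rw [pow_succ] at hm'2 ⊢; omega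
            omega
          have : (m':ℝ) + 1 ≤ 2*(m:ℝ) := by exact_mod_cast h'
          linarith
        have hxQ : x = (2:ℝ)^(e-1) * (2*m) := by
          rw [hxe, ← hPQ]; ring
        constructor
        · rw [hfe, heq, hxQ]
          have : (2:ℝ)^(e-1) * (m':ℝ) ≤ (2:ℝ)^(e-1) * (2*m-1) := by nlinarith
          linarith [this]
        · intro hm3
          have hm'le2 : (m':ℝ) ≤ 2*m - 2 := by
            have h1 : m' + 2 ≤ 2 * m := by
              rw [pow_succ] at hm'2; omega
            have : (m':ℝ) + 2 ≤ 2*(m:ℝ) := by exact_mod_cast h1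
            linarith
          rw [hfe, heq, hxQ, ← hPQ]
          nlinarith
      · -- e' ≤ e - 2
        right
        have hfsmall : f < (2:ℝ)^(e' + (μ+1:ℕ)) := by
          rw [hfe, zpow_add₀ (two_ne_zero), zpow_natCast]
          have := zpow_pos (two_pos (α := ℝ)) e'
          nlinarith
        have hle2 : (2:ℝ)^(e' + (μ+1:ℕ)) ≤ (2:ℝ)^(e + μ - 1) := by
          apply zpow_le_zpow_right₀ one_le_two
          push_cast; omega
        have hxbig : (2:ℝ)^(e+μ-1) * 2 ≤ x := by
          have : (2:ℝ)^(e+μ-1) * 2 = (2:ℝ)^e * 2^μ := by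
            rw [← zpow_add_one₀ (two_ne_zero)]
            rw [show e + μ - 1 + 1 = e + (μ:ℤ) by ring, zpow_add₀ (two_ne_zero), zpow_natCast]
          rw [this]; exact hxmu
        have hPle : (2:ℝ)^e ≤ (2:ℝ)^(e+μ-1) := by
          apply zpow_le_zpow_right₀ one_le_two; omega
        constructor
        · linarith
        · intro _; linarith
  · -- subnormal f
    have hrR : (r:ℝ) ≤ (2:ℝ)^μ - 1 := by
      have : r + 1 ≤ 2^μ := hr2
      have := (by exact_mod_cast this : ((r+1:ℕ):ℝ) ≤ ((2^μ:ℕ):ℝ))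
      push_cast at this; linarith
    have hEm : (0:ℝ) < 2^emin := zpow_pos two_pos emin
    have hfsub : f ≤ (2:ℝ)^emin * 2^μ - 2^emin := by
      rw [hfe]; nlinarith
    have hEmu : (2:ℝ)^emin * 2^μ = 2^(emin + μ) := by
      rw [zpow_add₀ (two_ne_zero), zpow_natCast]
    rcases eq_or_lt_of_le hee with heq | hlt
    · -- e = emin
      right
      have hxf : (2:ℝ)^e ≤ x - f := by
        rw [heq] at hfsub hEm
        have : (2:ℝ)^e * 2^μ ≤ x := hxmu
        linarith
      constructor
      · linarith
      · intro _; linarith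
    · -- emin < e
      right
      have h1 : (2:ℝ)^(emin+μ) ≤ (2:ℝ)^(e+μ-1) := by
        apply zpow_le_zpow_right₀ one_le_two; omega
      have hxbig : (2:ℝ)^(e+μ-1) * 2 ≤ x := by
        have : (2:ℝ)^(e+μ-1) * 2 = (2:ℝ)^e * 2^μ := by
          rw [← zpow_add_one₀ (two_ne_zero)]
          rw [show e + μ - 1 + 1 = e + (μ:ℤ) by ring, zpow_add₀ (two_ne_zero), zpow_natCast]
        rw [this]; exact hxmu
      have hPle : (2:ℝ)^e ≤ (2:ℝ)^(e+μ-1) := by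
        apply zpow_le_zpow_right₀ one_le_two; omega
      have hfb : f ≤ (2:ℝ)^(emin+μ) := by rw [← hEmu]; linarith
      have hxf : (2:ℝ)^e ≤ x - f := by linarith only [hfb, h1, hxbig, hPle]
      have hQP : (2:ℝ)^(e-1) ≤ 2^e := by linarith only [hPQ, hQ]
      constructor
      · linarith only [hxf, hQP]
      · intro _; linarith only [hxf]

lemma round_to_mult {μ : ℕ} (M d : ℕ) (hd : 0 < d) (hlo : 2^μ * d ≤ M) (hhi : M < 2^(μ+1) * d) :
    ∃ k : ℕ, 2^μ ≤ k ∧ k ≤ 2^(μ+1) ∧ |(k:ℝ)*d - M| ≤ (d:ℝ)/2 := by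
  set q := M / d with hq
  set s := M % d with hs
  have hMqs : d * q + s = M := Nat.div_add_mod M d
  have hsd : s < d := Nat.mod_lt _ hd
  have hq1 : 2^μ ≤ q := (Nat.le_div_iff_mul_le hd).mpr hlo
  have hq2 : q < 2^(μ+1) := (Nat.div_lt_iff_lt_mul hd).mpr hhi
  have hMR : (M:ℝ) = d * q + s := by exact_mod_cast hMqs.symm
  have hsR : (s:ℝ) < (d:ℝ) := by exact_mod_cast hsd
  have hs0 : (0:ℝ) ≤ s := Nat.cast_nonneg s
  by_cases h2s : 2 * s ≤ d
  · have h2sR : 2 * (s:ℝ) ≤ d := by exact_mod_cast h2s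
    refine ⟨q, hq1, hq2.le, ?_⟩
    rw [abs_le]
    constructor <;> [skip; skip] <;> nlinarith [hMR]
  · have h2sR : (d:ℝ) + 1 ≤ 2 * s := by
      have : d + 1 ≤ 2 * s := by omega
      exact_mod_cast this
    refine ⟨q + 1, by omega, by omega, ?_⟩
    rw [abs_le]
    push_cast
    constructor <;> nlinarith [hMR]

set_option maxHeartbeats 1000000 in
lemma core_lemma {μ : ℕ} (hμ : 1 ≤ μ) {F : Set ℝ} {fl1 fl2 : ℝ → ℝ}
    (hfl1 : RTN F fl1) (hfl2 : RTN F fl2)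
    {E0 e : ℤ} {x : ℝ} {m : ℕ} (t : ℕ) (ht : t ≤ 1)
    (hm1 : 2^μ + 1 ≤ m) (hm2 : m < 2^(μ+1))
    (hM1 : 2^(2*μ+t) ≤ m^2) (hM2 : m^2 < 2^(2*μ+t+1))
    (hxe : x = (2:ℝ)^e * m) (hxF : x ∈ F)
    (hν : (2:ℝ)^(E0 + μ) ≤ x^2)
    (hmem : ∀ (k : ℕ) (e' : ℤ), 2^μ ≤ k → k ≤ 2^(μ+1) → E0 ≤ e' → (2:ℝ)^e' * k ∈ F)
    (hgap : ∀ f ∈ F, f ≠ x → x + 2^e ≤ f ∨ f ≤ x - 2^(e-1+t)) :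
    fl2 (Real.sqrt (fl1 (x^2))) = x := by
  have hP : (0:ℝ) < 2^e := zpow_pos two_pos e
  set P : ℝ := (2:ℝ)^e with hPdef
  have hP2 : (0:ℝ) < P^2 := by positivity
  have hT1 : (1:ℝ) ≤ 2^t := one_le_pow₀ one_le_two
  have hT2 : (2:ℝ)^t ≤ 2 := by
    calc (2:ℝ)^t ≤ 2^1 := pow_le_pow_right₀ one_le_two ht
    _ = 2 := pow_one 2
  set T : ℝ := (2:ℝ)^t with hTdef
  have hT0 : (0:ℝ) < T := by positivity
  have hMu : (2:ℝ) ≤ 2^μ := two_le_pow_mu hμ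
  set Mu : ℝ := (2:ℝ)^μ with hMudef
  have hmR : Mu + 1 ≤ (m:ℝ) := by
    have h' : ((2^μ + 1 : ℕ):ℝ) ≤ (m:ℝ) := by exact_mod_cast hm1
    push_cast at h'; linarith
  have hmR2 : (m:ℝ) < 2^(μ+1) := by exact_mod_cast hm2
  -- nearest multiple of d = 2^(μ+t)
  obtain ⟨k, hk1, hk2, herr⟩ := round_to_mult (μ := μ) (m^2) (2^(μ+t))
    (Nat.pow_pos two_pos)
    (by rw [← pow_add, show μ + (μ+t) = 2*μ+t from by omega]; exact hM1)
    (by rw [← pow_add, show μ + 1 + (μ+t) = 2*μ+t+1 from by omega]; exact hM2)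
  have hdR : ((2^(μ+t) : ℕ) : ℝ) = Mu * T := by push_cast [pow_add]; rfl
  have hA : (2:ℝ)^(2*e) = P^2 := by rw [two_mul, zpow_add₀ two_ne_zero, sq]
  have hsq : x^2 = (2:ℝ)^(2*e) * ((m^2 : ℕ):ℝ) := by
    rw [hxe, hA]; push_cast; ring
  have hMlt : ((m^2:ℕ):ℝ) < 2^(2*μ+t+1) := by exact_mod_cast hM2
  have hMge : (2:ℝ)^(2*μ+t) ≤ ((m^2:ℕ):ℝ) := by exact_mod_cast hM1
  -- E0 ≤ 2e+μ+t
  have hE0 : E0 ≤ 2*e + μ + t := by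
    have h1 : x^2 < (2:ℝ)^(2*e) * 2^(2*μ+t+1) := by
      rw [hsq]
      exact mul_lt_mul_of_pos_left hMlt (by rw [hA]; exact hP2)
    have h2 : (2:ℝ)^(2*e) * 2^(2*μ+t+1) = (2:ℝ)^(2*e + (2*μ+t+1 : ℕ)) := by
      rw [zpow_add₀ two_ne_zero, zpow_natCast]
    have h3 : (2:ℝ)^(E0 + μ) < (2:ℝ)^(2*e + (2*μ+t+1 : ℕ)) := by
      rw [← h2]; exact lt_of_le_of_lt hν h1
    have h4 := (zpow_lt_zpow_iff_right₀ one_lt_two).mp h3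
    push_cast at h4
    omega
  -- the nearby element f of F
  set f : ℝ := (2:ℝ)^(2*e + μ + t) * k with hfdef
  have hfF : f ∈ F := hmem k _ hk1 hk2 hE0
  have hfeq : f = (2:ℝ)^(2*e) * (((2^(μ+t):ℕ)):ℝ) * k := by
    rw [hfdef, show 2*e + (μ:ℤ) + (t:ℤ) = 2*e + ((μ+t : ℕ) : ℤ) from by push_cast; ring,
      zpow_add₀ two_ne_zero, zpow_natCast]
    push_cast
    ring
  set y : ℝ := fl1 (x^2) with hydef
  have hyerr : |y - x^2| ≤ P^2 * (Mu * T / 2) := by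
    have h1 := (hfl1 (x^2)).2 f hfF
    have h2 : f - x^2 = (2:ℝ)^(2*e) * ((k:ℝ) * (2^(μ+t):ℕ) - ((m^2:ℕ):ℝ)) := by
      rw [hfeq, hsq]; ring
    have h3 : |f - x^2| ≤ P^2 * (Mu * T / 2) := by
      rw [h2, abs_mul, abs_of_pos (by rw [hA]; exact hP2), hA]
      calc P^2 * |(k:ℝ) * (2^(μ+t):ℕ) - ((m^2:ℕ):ℝ)| ≤ P^2 * (((2^(μ+t):ℕ):ℝ)/2) :=
        mul_le_mul_of_nonneg_left herr hP2.le
      _ = P^2 * (Mu * T / 2) := by rw [hdR]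
    exact le_trans h1 h3
  rw [abs_le] at hyerr
  obtain ⟨hylo, hyhi⟩ := hyerr
  -- scalar inequalities
  have hMu0 : (0:ℝ) ≤ Mu := by linarith
  have ha1 : Mu * T ≤ Mu * 2 := mul_le_mul_of_nonneg_left hT2 hMu0
  have key1 : Mu * T / 2 < (m:ℝ) + 1/4 := by linarith
  have key2 : Mu * T / 2 < (m:ℝ) * T / 2 - T^2/16 := by
    have h := mul_pos hT0 (show (0:ℝ) < 8*((m:ℝ) - Mu) - T by linarith)
    ring_nf at h ⊢
    linarith [h]
  have hid1 : (x + P/2)^2 = x^2 + P^2*((m:ℝ) + 1/4) := by rw [hxe]; ring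
  have hid2 : (x - P*T/4)^2 = x^2 - P^2*((m:ℝ)*T/2 - T^2/16) := by rw [hxe]; ring
  have hk1' := mul_lt_mul_of_pos_left key1 hP2
  have hk2' := mul_lt_mul_of_pos_left key2 hP2
  have hyup : y < (x + P/2)^2 := by rw [hid1]; linarith
  have hylow : (x - P*T/4)^2 < y := by rw [hid2]; linarith
  have hx0 : 0 < x := by
    rw [hxe]; have : (0:ℝ) < m := by linarith
    positivity
  have hcnn : 0 ≤ x - P*T/4 := by
    rw [hxe]; nlinarith
  have hz2 : Real.sqrt y < x + P/2 := (Real.sqrt_lt' (by linarith)).mpr hyup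
  have hz1 : x - P*T/4 < Real.sqrt y := (Real.lt_sqrt hcnn).mpr hylow
  -- conclude
  apply rtn_closest hfl2 hxF
  intro f' hf' hne
  have hbP : (2:ℝ)^(e-1+(t:ℤ)) = P * T / 2 := by
    rw [show e - 1 + (t:ℤ) = e + (t:ℤ) + (-1) from by ring, zpow_add₀ two_ne_zero,
      zpow_add₀ two_ne_zero, zpow_natCast]
    norm_num [hPdef, hTdef]
    ring
  have hb : (0:ℝ) < 2^(e-1+(t:ℤ)) := zpow_pos two_pos _
  have hba : (2:ℝ)^(e-1+(t:ℤ)) ≤ 2^e := by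
    apply zpow_le_zpow_right₀ one_le_two
    have : (t:ℤ) ≤ 1 := by exact_mod_cast ht
    omega
  refine closest_of_gap hb hba (hgap f' hf' hne) ?_ ?_
  · rw [hbP]; convert hz1 using 2; ring
  · have : P/2 = (2:ℝ)^e/2 := rfl
    linarith [hz2]

lemma key_lemma {μ : ℕ} (hμ : 1 ≤ μ) {F : Set ℝ} {fl1 fl2 : ℝ → ℝ}
    (hfl1 : RTN F fl1) (hfl2 : RTN F fl2)
    {E0 emin e : ℤ} {x : ℝ} {m : ℕ}
    (hm1 : 2^μ ≤ m) (hm2 : m < 2^(μ+1))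
    (hxe : x = (2:ℝ)^e * m) (hxF : x ∈ F)
    (hν : (2:ℝ)^(E0 + μ) ≤ x^2)
    (hmem : ∀ (k : ℕ) (e' : ℤ), 2^μ ≤ k → k ≤ 2^(μ+1) → E0 ≤ e' → (2:ℝ)^e' * k ∈ F)
    (hform : ∀ f ∈ F, f ≤ 0 ∨ (∃ e' : ℤ, ∃ m' : ℕ, 2^μ ≤ m' ∧ m' < 2^(μ+1) ∧ f = (2:ℝ)^e' * m')
      ∨ (emin ≤ e ∧ ∃ r : ℕ, 1 ≤ r ∧ r < 2^μ ∧ f = (2:ℝ)^emin * r)) :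
    fl2 (Real.sqrt (fl1 (x^2))) = x := by
  have hx0 : 0 ≤ x := by
    rw [hxe]
    have : (0:ℝ) ≤ m := Nat.cast_nonneg m
    positivity
  by_cases hm : m = 2^μ
  · -- x^2 is exactly representable
    have hx2 : x^2 = (2:ℝ)^(2*e+μ) * ((2^μ:ℕ):ℝ) := by
      rw [hxe, hm, show (2:ℤ)*e + μ = e + e + (μ:ℤ) from by ring,
        zpow_add₀ two_ne_zero, zpow_add₀ two_ne_zero, zpow_natCast]
      push_cast
      ring
    have hE0 : E0 ≤ 2*e + μ := by
      have h1 : (2:ℝ)^(2*e+μ+μ) = x^2 := by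
        rw [show (2:ℤ)*e + μ + μ = (2*e+(μ:ℤ)) + (μ:ℤ) from by ring,
          zpow_add₀ two_ne_zero, hx2, zpow_natCast]
        push_cast
        ring
      rw [← h1] at hν
      have := (zpow_le_zpow_iff_right₀ (one_lt_two (α := ℝ))).mp hν
      omega
    have hx2F : x^2 ∈ F := by
      rw [hx2]
      exact hmem (2^μ) _ le_rfl (Nat.pow_le_pow_right (by norm_num) (by omega)) hE0
    rw [rtn_fix hfl1 hx2F, Real.sqrt_sq hx0, rtn_fix hfl2 hxF]
  · have hm1' : 2^μ + 1 ≤ m := by omega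
    have hgap := fun f hf hne => gap_lemma hμ hm1 hm2 hxe (hform f hf) hne
    rcases le_or_gt (2^(2*μ+1)) (m^2) with hc | hb
    · -- t = 1
      have hM2 : m^2 < 2^(2*μ+1+1) := by
        have h1 : m^2 < (2^(μ+1))^2 := Nat.pow_lt_pow_left hm2 (by norm_num)
        have h2 : (2^(μ+1))^2 = 2^(2*μ+1+1) := by rw [← pow_mul]; congr 1; omega
        omega
      refine core_lemma hμ hfl1 hfl2 1 le_rfl hm1' hm2 hc hM2 hxe hxF hν hmem ?_
      intro f hf hne
      rcases hgap f hf hne with h | ⟨_, h2⟩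
      · exact Or.inl h
      · right
        have : e - 1 + ((1:ℕ):ℤ) = e := by simp
        rw [this]
        exact h2 hm1'
    · -- t = 0
      have hM1 : 2^(2*μ+0) ≤ m^2 := by
        have h1 : (2^μ)^2 ≤ m^2 := Nat.pow_le_pow_left hm1 2
        have h2 : (2^μ)^2 = 2^(2*μ+0) := by rw [← pow_mul]; congr 1; omega
        omega
      refine core_lemma hμ hfl1 hfl2 0 (by omega) hm1' hm2 hM1 (by simpa using hb) hxe hxF hν hmem ?_
      intro f hf hne
      rcases hgap f hf hne with h | ⟨h1, _⟩
      · exact Or.inl h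
      · right
        have : e - 1 + ((0:ℕ):ℤ) = e - 1 := by simp
        rw [this]
        exact h1

theorem stmt6 (μ : ℕ) (hμ : 1 ≤ μ) (emin : ℤ) (hemin : emin < -(μ : ℤ))
    (F : Set ℝ) (ν : ℝ)
    (hF : (F = PerfectF 2 μ ∧ ν = 0) ∨
          (F = IEEEF 2 μ emin ∧ ν = (2 : ℝ) ^ (emin + μ)) ∨
          (F = MPFRF 2 μ emin ∧ ν = (2 : ℝ) ^ (emin + μ)))
    (fl1 fl2 : ℝ → ℝ) (hfl1 : RTN F fl1) (hfl2 : RTN F fl2)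
    (x : ℝ) (hx : x ∈ F) (hx2 : ν ≤ x ^ 2) :
    fl2 (Real.sqrt (fl1 (x ^ 2))) = |x| := by
  rcases eq_or_ne x 0 with hx0 | hx0
  · subst hx0
    have h0F : (0:ℝ) ∈ F := by
      rcases hF with ⟨hFe,_⟩ | ⟨hFe,_⟩ | ⟨hFe,_⟩ <;> rw [hFe]
      · exact Or.inl rfl
      · exact Or.inl (Or.inl rfl)
      · exact Or.inl rfl
    have h00 : (0:ℝ)^2 = 0 := by ring
    rw [h00, rtn_fix hfl1 h0F, Real.sqrt_zero, rtn_fix hfl2 h0F, abs_zero]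
  · rw [← sq_abs x]
    have habs : |x|^2 = x^2 := sq_abs x
    rcases hF with ⟨hFe, hνe⟩ | ⟨hFe, hνe⟩ | ⟨hFe, hνe⟩
    · -- Perfect
      rw [hFe] at hx
      obtain ⟨e, m, hm1, hm2, hxe⟩ := decomp_perfect hx hx0
      have hxF : |x| ∈ F := by rw [hFe, hxe]; exact mem_perfect hm1 hm2.le
      have hν : (2:ℝ)^((2*e+μ) + μ) ≤ |x|^2 := by
        have hP : (0:ℝ) < 2^e := zpow_pos two_pos e
        have hmR : ((2:ℝ))^μ ≤ (m:ℝ) := by exact_mod_cast hm1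
        have h1 : (2:ℝ)^((2*e+μ) + μ) = (2^e)^2 * (2^μ * 2^μ) := by
          rw [show (2*e+(μ:ℤ)) + (μ:ℤ) = (e + e) + ((μ:ℤ) + (μ:ℤ)) from by ring,
            zpow_add₀ two_ne_zero, zpow_add₀ two_ne_zero, zpow_add₀ two_ne_zero,
            zpow_natCast]
          ring
        rw [h1, hxe]
        have h2 : (0:ℝ) < 2^μ := by positivity
        have h3 : (2:ℝ)^μ * 2^μ ≤ (m:ℝ)*(m:ℝ) :=
          mul_le_mul hmR hmR h2.le (by positivity)
        have h4 := mul_le_mul_of_nonneg_left h3 (sq_nonneg ((2:ℝ)^e))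
        nlinarith [h4]
      refine key_lemma hμ hfl1 hfl2 (emin := e) hm1 hm2 hxe hxF hν ?_ ?_
      · intro k e' hk1 hk2 _
        rw [hFe]
        exact mem_perfect hk1 hk2
      · intro f hf
        rw [hFe] at hf
        rcases elem_perfect hf with h | h
        · exact Or.inl h
        · exact Or.inr (Or.inl h)
    · -- IEEE
      rw [hFe] at hx
      rcases decomp_ieee hx hx0 with ⟨e, he, m, hm1, hm2, hxe⟩ | ⟨r, hr1, hr2, hxe⟩
      · have hxF : |x| ∈ F := by rw [hFe, hxe]; exact mem_ieee he hm1 hm2.le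
        have hν : (2:ℝ)^(emin + μ) ≤ |x|^2 := by rw [habs, ← hνe]; exact hx2
        refine key_lemma hμ hfl1 hfl2 (emin := emin) hm1 hm2 hxe hxF hν ?_ ?_
        · intro k e' hk1 hk2 he'
          rw [hFe]
          exact mem_ieee he' hk1 hk2
        · intro f hf
          rw [hFe] at hf
          rcases elem_ieee hf with h | h | h
          · exact Or.inl h
          · exact Or.inr (Or.inl h)
          · exact Or.inr (Or.inr ⟨he, h⟩)
      · -- subnormal: contradiction with ν ≤ x²
        exfalso
        have hE : (0:ℝ) < 2^emin := zpow_pos two_pos emin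
        have hrR : (r:ℝ) < (2:ℝ)^μ := by exact_mod_cast hr2
        have hr0 : (0:ℝ) ≤ (r:ℝ) := Nat.cast_nonneg r
        have h1 : x^2 < (2:ℝ)^(emin+μ) * (2:ℝ)^(emin+μ) := by
          rw [← habs, hxe, zpow_add₀ two_ne_zero, zpow_natCast]
          have h4 : (r:ℝ)*r < (2:ℝ)^μ*2^μ := mul_lt_mul'' hrR hrR hr0 hr0
          have h5 := mul_lt_mul_of_pos_left h4 (mul_pos hE hE)
          nlinarith [h5]
        have h2 : (2:ℝ)^(emin+μ) ≤ 1 := by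
          have : (2:ℝ)^(emin+μ) ≤ 2^(0:ℤ) := by
            apply zpow_le_zpow_right₀ one_le_two
            omega
          simpa using this
        have h3 : x^2 < (2:ℝ)^(emin+μ) := by
          have hA0 : (0:ℝ) < 2^(emin+(μ:ℤ)) := zpow_pos two_pos _
          nlinarith [mul_le_mul_of_nonneg_left h2 hA0.le]
        rw [hνe] at hx2
        linarith
    · -- MPFR
      rw [hFe] at hx
      obtain ⟨e, he, m, hm1, hm2, hxe⟩ := decomp_mpfr hx hx0
      have hxF : |x| ∈ F := by rw [hFe, hxe]; exact mem_mpfr he hm1 hm2.le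
      have hν : (2:ℝ)^(emin + μ) ≤ |x|^2 := by rw [habs, ← hνe]; exact hx2
      refine key_lemma hμ hfl1 hfl2 (emin := emin) hm1 hm2 hxe hxF hν ?_ ?_
      · intro k e' hk1 hk2 he'
        rw [hFe]
        exact mem_mpfr he' hk1 hk2
      · intro f hf
        rw [hFe] at hf
        rcases elem_mpfr hf with h | h
        · exact Or.inl h
        · exact Or.inr (Or.inl h)
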